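/- Let t be a positive even integer, let L be an even unimodular lattice containing U ⊕ U as an orthogonal direct summand, and let Λ = L ⊕ ℤe be the orthogonal direct sum with q(e) = −t. For every primitive vector x ∈ L and every integer b there exists a primitive vector x' ∈ L such that the vectors t·x + b·e and t·x' + (b − t)·e have the same square and the same divisibility in Λ, and they lie in the same Õ(Λ)-orbit. Consequently, every vector of Λ of the form t·x + b·e with x ∈ L primitive is Õ(Λ)-conjugate to a vector of the form t·x' + b'·e with x' ∈ L primitive and |b'| ≤ t/2. -/

import Mathlib

open LinearMap (BilinForm)

/-- A vector of a `ℤ`-module is primitive if `v = m • w` forces `m = ±1`. -/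
def IsPrimitiveVec {M : Type*} [AddCommGroup M] [Module ℤ M] (v : M) : Prop :=
  ∀ (m : ℤ) (w : M), v = m • w → m = 1 ∨ m = -1

/-- The bilinear form is symmetric. -/
def IsSymmForm {M : Type*} [AddCommGroup M] [Module ℤ M] (B : BilinForm ℤ M) : Prop :=
  ∀ x y : M, B x y = B y x

/-- The lattice is even: every square `q(v) = B v v` is even. -/
def IsEvenForm {M : Type*} [AddCommGroup M] [Module ℤ M] (B : BilinForm ℤ M) : Prop :=
  ∀ x : M, Even (B x x)

/-- The lattice is unimodular: `v ↦ B v ·` is an isomorphism onto the dual module. -/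
def IsUnimodularForm {M : Type*} [AddCommGroup M] [Module ℤ M] (B : BilinForm ℤ M) : Prop :=
  Function.Bijective fun v : M => B v

/-- The lattice is nondegenerate. -/
def IsNondegForm {M : Type*} [AddCommGroup M] [Module ℤ M] (B : BilinForm ℤ M) : Prop :=
  ∀ v : M, (∀ w : M, B v w = 0) → v = 0

/-- The lattice contains `U ⊕ U` (two orthogonal hyperbolic planes) as an orthogonal
direct summand; since `U ⊕ U` is unimodular this is equivalent to containing vectors
with the appropriate Gram matrix. -/
def ContainsUU {M : Type*} [AddCommGroup M] [Module ℤ M] (B : BilinForm ℤ M) : Prop :=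
  ∃ u₁ u₂ u₃ u₄ : M,
    B u₁ u₁ = 0 ∧ B u₂ u₂ = 0 ∧ B u₁ u₂ = 1 ∧
    B u₃ u₃ = 0 ∧ B u₄ u₄ = 0 ∧ B u₃ u₄ = 1 ∧
    B u₁ u₃ = 0 ∧ B u₁ u₄ = 0 ∧ B u₂ u₃ = 0 ∧ B u₂ u₄ = 0

/-- `d` is the divisibility of `z`: the nonnegative generator of the ideal
`{B z w : w ∈ Λ}` of `ℤ`. -/
def IsDivisibility {M : Type*} [AddCommGroup M] [Module ℤ M]
    (B : BilinForm ℤ M) (z : M) (d : ℤ) : Prop :=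
  0 ≤ d ∧ (∀ w : M, d ∣ B z w) ∧ ∀ d' : ℤ, (∀ w : M, d' ∣ B z w) → d' ∣ d

/-- `γ` belongs to the stable orthogonal group `Õ(Λ)`: it is an isometry acting
trivially on the discriminant group `Λ*/Λ`.  For a nondegenerate lattice the dual
lattice `Λ*` is identified with `Hom(Λ, ℤ)` via `v ↦ B(v,·)`, under which `Λ ⊂ Λ*`
becomes the image of `B`; triviality on the discriminant says that for every
functional `f` the difference `f ∘ γ - f` is of the form `B x ·` for some `x ∈ Λ`. -/
def IsStableIsometry {M : Type*} [AddCommGroup M] [Module ℤ M]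
    (B : BilinForm ℤ M) (γ : M ≃ₗ[ℤ] M) : Prop :=
  (∀ v w : M, B (γ v) (γ w) = B v w) ∧
  ∀ f : M →ₗ[ℤ] ℤ, ∃ x : M, ∀ w : M, f (γ w) - f w = B x w

/-- The rank-2 sublattice spanned by `u` and `v` is negative definite. -/
def NegDefPair {M : Type*} [AddCommGroup M] [Module ℤ M]
    (B : BilinForm ℤ M) (u v : M) : Prop :=
  LinearIndependent ℤ ![u, v] ∧
  ∀ w ∈ Submodule.span ℤ ({u, v} : Set M), w ≠ 0 → B w w < 0

/-- The rank-2 sublattice spanned by `u` and `v` is negative semidefinite. -/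
def NegSemidefPair {M : Type*} [AddCommGroup M] [Module ℤ M]
    (B : BilinForm ℤ M) (u v : M) : Prop :=
  LinearIndependent ℤ ![u, v] ∧
  ∀ w ∈ Submodule.span ℤ ({u, v} : Set M), B w w ≤ 0

/-- The Gram determinant of a pair of vectors. -/
def GramDet {M : Type*} [AddCommGroup M] [Module ℤ M]
    (B : BilinForm ℤ M) (u v : M) : ℤ :=
  B u u * B v v - (B u v) ^ 2

/-- The orthogonal direct sum `Λ = L ⊕ ℤe` with `q(e) = -t`, realized on `L × ℤ`
with `e = (0, 1)`. -/
def prodForm {L : Type*} [AddCommGroup L] [Module ℤ L]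
    (B : BilinForm ℤ L) (t : ℤ) : BilinForm ℤ (L × ℤ) :=
  LinearMap.mk₂ ℤ (fun v w => B v.1 w.1 - t * v.2 * w.2)
    (fun v v' w => by simp; ring)
    (fun c v w => by simp; ring)
    (fun v w w' => by simp; ring)
    (fun c v w => by simp; ring)

/-- The lattice contains the hyperbolic plane `U` as an orthogonal direct summand;
since `U` is unimodular this is equivalent to containing two vectors with the
hyperbolic Gram matrix. -/
def ContainsU {M : Type*} [AddCommGroup M] [Module ℤ M] (B : BilinForm ℤ M) : Prop :=
  ∃ u₁ u₂ : M, B u₁ u₁ = 0 ∧ B u₂ u₂ = 0 ∧ B u₁ u₂ = 1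

/-! ### Auxiliary material -/

section NT

/-- Solvability predicate for the arithmetic core lemma. -/
private def NTSol (m k a₁ a₂ a₃ a₄ : ℤ) : Prop :=
  ∃ l α β γ δ : ℤ, l*k + α*a₁ + β*a₂ + γ*a₃ + δ*a₄ = -1 ∧ m*l^2 + α*β + γ*δ = 0

private def NTCombo (k a₁ a₂ a₃ a₄ : ℤ) : Prop :=
  ∃ c₀ c₁ c₂ c₃ c₄ : ℤ, c₀*k + c₁*a₁ + c₂*a₂ + c₃*a₃ + c₄*a₄ = -1

private lemma ntsol_base1 {m k a₁ a₂ a₃ a₄ : ℤ} (h3 : a₃ = 0) (h4 : a₄ = 0)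
    (hc : NTCombo k a₁ a₂ a₃ a₄) : NTSol m k a₁ a₂ a₃ a₄ := by
  obtain ⟨c₀, c₁, c₂, c₃, c₄, hc⟩ := hc
  exact ⟨c₀, c₁, c₂, 1, -(m*c₀^2 + c₁*c₂), by subst h3 h4; linear_combination hc, by ring⟩

private lemma ntsol_base2 {m k a₁ a₂ a₃ a₄ : ℤ} (h1 : a₁ = 0) (h2 : a₂ = 0)
    (hc : NTCombo k a₁ a₂ a₃ a₄) : NTSol m k a₁ a₂ a₃ a₄ := by
  obtain ⟨c₀, c₁, c₂, c₃, c₄, hc⟩ := hc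
  exact ⟨c₀, 1, -(m*c₀^2 + c₃*c₄), c₃, c₄, by subst h1 h2; linear_combination hc, by ring⟩

private lemma ntsol_O1 {m k a₁ a₂ a₃ a₄ : ℤ} (n b₂ b₃ : ℤ) (h₂ : b₂ = a₂ - n*a₄) (h₃ : b₃ = a₃ + n*a₁)
    (h : NTSol m k a₁ b₂ b₃ a₄) : NTSol m k a₁ a₂ a₃ a₄ := by
  obtain ⟨l, α, β, γ, δ, hlin, hq⟩ := h
  exact ⟨l, α + n*γ, β, γ, δ - n*β, by subst h₂ h₃; linear_combination hlin,
    by linear_combination hq⟩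

private lemma ntcombo_O1 {k a₁ a₂ a₃ a₄ : ℤ} (n b₂ b₃ : ℤ) (h₂ : b₂ = a₂ - n*a₄) (h₃ : b₃ = a₃ + n*a₁)
    (h : NTCombo k a₁ a₂ a₃ a₄) : NTCombo k a₁ b₂ b₃ a₄ := by
  obtain ⟨c₀, c₁, c₂, c₃, c₄, hc⟩ := h
  exact ⟨c₀, c₁ - n*c₃, c₂, c₃, c₄ + n*c₂, by subst h₂ h₃; linear_combination hc⟩

private lemma ntsol_O3 {m k a₁ a₂ a₃ a₄ : ℤ} (n b₂ b₄ : ℤ) (h₂ : b₂ = a₂ + n*a₃) (h₄ : b₄ = a₄ - n*a₁)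
    (h : NTSol m k a₁ b₂ a₃ b₄) : NTSol m k a₁ a₂ a₃ a₄ := by
  obtain ⟨l, α, β, γ, δ, hlin, hq⟩ := h
  exact ⟨l, α - n*δ, β, γ + n*β, δ, by subst h₂ h₄; linear_combination hlin,
    by linear_combination hq⟩

private lemma ntcombo_O3 {k a₁ a₂ a₃ a₄ : ℤ} (n b₂ b₄ : ℤ) (h₂ : b₂ = a₂ + n*a₃) (h₄ : b₄ = a₄ - n*a₁)
    (h : NTCombo k a₁ a₂ a₃ a₄) : NTCombo k a₁ b₂ a₃ b₄ := by
  obtain ⟨c₀, c₁, c₂, c₃, c₄, hc⟩ := h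
  exact ⟨c₀, c₁ + n*c₄, c₂, c₃ - n*c₂, c₄, by subst h₂ h₄; linear_combination hc⟩

private lemma ntsol_swap12 {m k a₁ a₂ a₃ a₄ : ℤ} (h : NTSol m k a₂ a₁ a₃ a₄) : NTSol m k a₁ a₂ a₃ a₄ := by
  obtain ⟨l, α, β, γ, δ, hlin, hq⟩ := h
  exact ⟨l, β, α, γ, δ, by linear_combination hlin, by linear_combination hq⟩

private lemma ntcombo_swap12 {k a₁ a₂ a₃ a₄ : ℤ} (h : NTCombo k a₁ a₂ a₃ a₄) : NTCombo k a₂ a₁ a₃ a₄ := by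
  obtain ⟨c₀, c₁, c₂, c₃, c₄, hc⟩ := h
  exact ⟨c₀, c₂, c₁, c₃, c₄, by linear_combination hc⟩

private lemma ntsol_swap34 {m k a₁ a₂ a₃ a₄ : ℤ} (h : NTSol m k a₁ a₂ a₄ a₃) : NTSol m k a₁ a₂ a₃ a₄ := by
  obtain ⟨l, α, β, γ, δ, hlin, hq⟩ := h
  exact ⟨l, α, β, δ, γ, by linear_combination hlin, by linear_combination hq⟩

private lemma ntcombo_swap34 {k a₁ a₂ a₃ a₄ : ℤ} (h : NTCombo k a₁ a₂ a₃ a₄) : NTCombo k a₁ a₂ a₄ a₃ := by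
  obtain ⟨c₀, c₁, c₂, c₃, c₄, hc⟩ := h
  exact ⟨c₀, c₁, c₂, c₄, c₃, by linear_combination hc⟩

private lemma ntsol_swapP {m k a₁ a₂ a₃ a₄ : ℤ} (h : NTSol m k a₃ a₄ a₁ a₂) : NTSol m k a₁ a₂ a₃ a₄ := by
  obtain ⟨l, α, β, γ, δ, hlin, hq⟩ := h
  exact ⟨l, γ, δ, α, β, by linear_combination hlin, by linear_combination hq⟩

private lemma ntcombo_swapP {k a₁ a₂ a₃ a₄ : ℤ} (h : NTCombo k a₁ a₂ a₃ a₄) : NTCombo k a₃ a₄ a₁ a₂ := by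
  obtain ⟨c₀, c₁, c₂, c₃, c₄, hc⟩ := h
  exact ⟨c₀, c₃, c₄, c₁, c₂, by linear_combination hc⟩

private lemma ntsol_neg12 {m k a₁ a₂ a₃ a₄ : ℤ} (h : NTSol m k (-a₁) (-a₂) a₃ a₄) : NTSol m k a₁ a₂ a₃ a₄ := by
  obtain ⟨l, α, β, γ, δ, hlin, hq⟩ := h
  exact ⟨l, -α, -β, γ, δ, by linear_combination hlin, by linear_combination hq⟩

private lemma ntcombo_neg12 {k a₁ a₂ a₃ a₄ : ℤ} (h : NTCombo k a₁ a₂ a₃ a₄) : NTCombo k (-a₁) (-a₂) a₃ a₄ := by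
  obtain ⟨c₀, c₁, c₂, c₃, c₄, hc⟩ := h
  exact ⟨c₀, -c₁, -c₂, c₃, c₄, by linear_combination hc⟩

private lemma nt_main : ∀ (N : ℕ) (m k a₁ a₂ a₃ a₄ : ℤ), a₁.natAbs ≤ N → 0 < a₁ →
    NTCombo k a₁ a₂ a₃ a₄ → NTSol m k a₁ a₂ a₃ a₄ := by
  intro N
  induction N with
  | zero => intro m k a₁ a₂ a₃ a₄ hN h1 _; omega
  | succ N ih =>
    intro m k a₁ a₂ a₃ a₄ hN h1 hc
    by_cases h3 : a₁ ∣ a₃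
    · by_cases h4 : a₁ ∣ a₄
      · have e3 := Int.ediv_mul_cancel h3
        have e4 := Int.ediv_mul_cancel h4
        have h3eq : (0:ℤ) = a₃ + (-(a₃/a₁))*a₁ := by linarith
        have h4eq : (0:ℤ) = a₄ - (a₄/a₁)*a₁ := by linarith
        apply ntsol_O1 (-(a₃/a₁)) (a₂ - (-(a₃/a₁))*a₄) 0 rfl h3eq
        apply ntsol_O3 (a₄/a₁) (a₂ - (-(a₃/a₁))*a₄ + (a₄/a₁)*0) 0 rfl h4eq
        apply ntsol_base1 rfl rfl
        apply ntcombo_O3 (a₄/a₁) _ _ rfl h4eq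
        apply ntcombo_O1 (-(a₃/a₁)) _ _ rfl h3eq
        exact hc
      · -- reduce a₄ mod a₁
        obtain ⟨r, hr⟩ : ∃ r, a₄ % a₁ = r := ⟨_, rfl⟩
        have hrd : r = a₄ - (a₄/a₁)*a₁ := by rw [← hr, Int.emod_def]; ring
        have hrne : r ≠ 0 := fun h0 => h4 (Int.dvd_of_emod_eq_zero (hr.trans h0))
        have hrlt : r < a₁ := hr ▸ Int.emod_lt_of_pos _ h1
        have hrpos : 0 ≤ r := hr ▸ Int.emod_nonneg _ (by omega)
        apply ntsol_O3 (a₄/a₁) (a₂ + (a₄/a₁)*a₃) r rfl hrd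
        apply ntsol_swap34
        apply ntsol_swapP
        apply ih m k r a₃ a₁ (a₂ + (a₄/a₁)*a₃) (by omega) (by omega)
        apply ntcombo_swapP
        apply ntcombo_swap34
        exact ntcombo_O3 (a₄/a₁) _ _ rfl hrd hc
    · -- reduce a₃ mod a₁
      obtain ⟨r, hr⟩ : ∃ r, a₃ % a₁ = r := ⟨_, rfl⟩
      have hrd : r = a₃ + (-(a₃/a₁))*a₁ := by rw [← hr, Int.emod_def]; ring
      have hrne : r ≠ 0 := fun h0 => h3 (Int.dvd_of_emod_eq_zero (hr.trans h0))
      have hrlt : r < a₁ := hr ▸ Int.emod_lt_of_pos _ h1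
      have hrpos : 0 ≤ r := hr ▸ Int.emod_nonneg _ (by omega)
      apply ntsol_O1 (-(a₃/a₁)) (a₂ - (-(a₃/a₁))*a₄) r rfl hrd
      apply ntsol_swapP
      apply ih m k r a₄ a₁ (a₂ - (-(a₃/a₁))*a₄) (by omega) (by omega)
      apply ntcombo_swapP
      exact ntcombo_O1 (-(a₃/a₁)) _ _ rfl hrd hc

private lemma nt_solvable (m k a₁ a₂ a₃ a₄ : ℤ) (hc : NTCombo k a₁ a₂ a₃ a₄) :
    NTSol m k a₁ a₂ a₃ a₄ := by
  rcases eq_or_ne a₃ 0 with h3 | h3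
  · rcases eq_or_ne a₄ 0 with h4 | h4
    · exact ntsol_base1 h3 h4 hc
    · rcases eq_or_ne a₁ 0 with h1 | h1
      · rcases eq_or_ne a₂ 0 with h2 | h2
        · exact ntsol_base2 h1 h2 hc
        · apply ntsol_swap12
          rcases lt_or_gt_of_ne h2 with hneg | hpos
          · exact ntsol_neg12 (nt_main (-a₂).natAbs m k (-a₂) (-a₁) a₃ a₄ le_rfl (by omega)
              (ntcombo_neg12 (ntcombo_swap12 hc)))
          · exact nt_main a₂.natAbs m k a₂ a₁ a₃ a₄ le_rfl hpos (ntcombo_swap12 hc)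
      · rcases lt_or_gt_of_ne h1 with hneg | hpos
        · exact ntsol_neg12 (nt_main (-a₁).natAbs m k (-a₁) (-a₂) a₃ a₄ le_rfl (by omega)
            (ntcombo_neg12 hc))
        · exact nt_main a₁.natAbs m k a₁ a₂ a₃ a₄ le_rfl hpos hc
  · apply ntsol_swapP
    rcases lt_or_gt_of_ne h3 with hneg | hpos
    · exact ntsol_neg12 (nt_main (-a₃).natAbs m k (-a₃) (-a₄) a₁ a₂ le_rfl (by omega)
        (ntcombo_neg12 (ntcombo_swapP hc)))
    · exact nt_main a₃.natAbs m k a₃ a₄ a₁ a₂ le_rfl hpos (ntcombo_swapP hc)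


end NT

section Dual

private lemma exists_dual_one {L : Type*} [AddCommGroup L] [Module ℤ L]
    [Module.Free ℤ L] [Module.Finite ℤ L]
    (x : L) (hx : IsPrimitiveVec x) : ∃ f : L →ₗ[ℤ] ℤ, f x = 1 := by
  classical
  set b := Module.Free.chooseBasis ℤ L with hb
  let I : Ideal ℤ :=
    { carrier := {n | ∃ f : L →ₗ[ℤ] ℤ, f x = n}
      add_mem' := by rintro a c ⟨f, hf⟩ ⟨g, hg⟩; exact ⟨f + g, by simp [hf, hg]⟩
      zero_mem' := ⟨0, rfl⟩
      smul_mem' := by rintro c a ⟨f, hf⟩; exact ⟨c • f, by simp [hf]⟩ }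
  obtain ⟨d, hd⟩ := (IsPrincipalIdealRing.principal I).principal
  have hdI : d ∈ I := hd ▸ Ideal.subset_span rfl
  obtain ⟨g, hg⟩ := hdI
  have hdvd : ∀ i, d ∣ b.repr x i := by
    intro i
    have : (b.coord i) x ∈ I := ⟨b.coord i, rfl⟩
    rw [hd, Ideal.submodule_span_eq, Ideal.mem_span_singleton] at this
    simpa [Module.Basis.coord_apply] using this
  -- w with coordinates (b.repr x i) / d
  set w : L := b.repr.symm (Finsupp.equivFunOnFinite.symm fun i => b.repr x i / d) with hw
  have hxd : x = d • w := by
    apply b.repr.injective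
    have h1 : b.repr (d • w) = d • b.repr w := map_zsmul b.repr d w
    rw [h1, hw, LinearEquiv.apply_symm_apply]
    ext i
    have h2 : (d • (Finsupp.equivFunOnFinite.symm fun i => b.repr x i / d)) i
        = d • ((Finsupp.equivFunOnFinite.symm fun i => b.repr x i / d) i) :=
      map_zsmul (Finsupp.applyAddHom (M := ℤ) i) d _
    rw [h2]
    simp only [Finsupp.coe_equivFunOnFinite_symm, zsmul_eq_mul, Int.cast_id]
    exact (Int.mul_ediv_cancel' (hdvd i)).symm
  rcases hx d _ hxd with h1 | h1
  · exact ⟨g, by rw [hg, h1]⟩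
  · exact ⟨-g, by simp [hg, h1]⟩


end Dual

section Lattice

open LinearMap (BilinForm)

variable {L : Type*} [AddCommGroup L] [Module ℤ L] (B : BilinForm ℤ L)

private lemma B_add (y z u : L) : B (y + z) u = B y u + B z u := by
  rw [map_add, LinearMap.add_apply]
private lemma B_smul (n : ℤ) (y u : L) : B (n • y) u = n * B y u := by
  simpa [zsmul_eq_mul] using map_zsmul (B.flip u) n y
private lemma B_add' (u y z : L) : B u (y + z) = B u y + B u z := map_add _ _ _
private lemma B_smul' (n : ℤ) (u y : L) : B u (n • y) = n * B u y := by
  simpa [zsmul_eq_mul] using map_zsmul (B u) n y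
private lemma B_neg (y u : L) : B (-y) u = -(B y u) := by
  simpa using B_smul B (-1) y u
private lemma B_neg' (y u : L) : B y (-u) = -(B y u) := by
  simpa [zsmul_eq_mul] using map_zsmul (B y) (-1) u

/-- Key lemma: for a primitive vector `x` in an even unimodular lattice containing
`U ⊕ U` there is an isotropic `u` with `B x u = -1`. -/
private lemma exists_isotropic [Module.Free ℤ L] [Module.Finite ℤ L]
    (hsymm : IsSymmForm B) (heven : IsEvenForm B)
    (huni : IsUnimodularForm B) (hUU : ContainsUU B)
    (x : L) (hx : IsPrimitiveVec x) :
    ∃ u : L, B u u = 0 ∧ B x u = -1 := by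
  obtain ⟨u₁, u₂, u₃, u₄, g11, g22, g12, g33, g44, g34, g13, g14, g23, g24⟩ := hUU
  have g21 : B u₂ u₁ = 1 := by rw [hsymm u₂ u₁]; exact g12
  have g43 : B u₄ u₃ = 1 := by rw [hsymm u₄ u₃]; exact g34
  have g31 : B u₃ u₁ = 0 := by rw [hsymm u₃ u₁]; exact g13
  have g41 : B u₄ u₁ = 0 := by rw [hsymm u₄ u₁]; exact g14
  have g32 : B u₃ u₂ = 0 := by rw [hsymm u₃ u₂]; exact g23
  have g42 : B u₄ u₂ = 0 := by rw [hsymm u₄ u₂]; exact g24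
  -- a vector pairing to -1 with x
  obtain ⟨f, hf⟩ := exists_dual_one x hx
  obtain ⟨v₀, hv₀⟩ := huni.2 (-f)
  have hv : B x v₀ = -1 := by
    rw [hsymm x v₀]
    show (fun v : L => B v) v₀ x = -1
    rw [hv₀]
    simp [hf]
  -- reduce v₀ modulo the two hyperbolic planes
  set p₁ := B v₀ u₁ with hp₁
  set p₂ := B v₀ u₂ with hp₂
  set p₃ := B v₀ u₃ with hp₃
  set p₄ := B v₀ u₄ with hp₄
  set w : L := v₀ + (-p₂) • u₁ + (-p₁) • u₂ + (-p₄) • u₃ + (-p₃) • u₄ with hw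
  have hw1 : B w u₁ = 0 := by
    rw [hw]; simp only [B_add, B_smul, g11, g21, g31, g41]; ring
  have hw2 : B w u₂ = 0 := by
    rw [hw]; simp only [B_add, B_smul, g12, g22, g32, g42]; ring
  have hw3 : B w u₃ = 0 := by
    rw [hw]; simp only [B_add, B_smul, g13, g23, g33, g43]; ring
  have hw4 : B w u₄ = 0 := by
    rw [hw]; simp only [B_add, B_smul, g14, g24, g34, g44]; ring
  have h1w : B u₁ w = 0 := by rw [hsymm u₁ w]; exact hw1
  have h2w : B u₂ w = 0 := by rw [hsymm u₂ w]; exact hw2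
  have h3w : B u₃ w = 0 := by rw [hsymm u₃ w]; exact hw3
  have h4w : B u₄ w = 0 := by rw [hsymm u₄ w]; exact hw4
  obtain ⟨m, hm⟩ := heven w
  set k := B x w with hk
  set a₁ := B x u₁ with ha₁
  set a₂ := B x u₂ with ha₂
  set a₃ := B x u₃ with ha₃
  set a₄ := B x u₄ with ha₄
  have hcombo : NTCombo k a₁ a₂ a₃ a₄ := by
    refine ⟨1, p₂, p₁, p₄, p₃, ?_⟩
    have : B x w = B x v₀ + (-p₂) * a₁ + (-p₁) * a₂ + (-p₄) * a₃ + (-p₃) * a₄ := by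
      rw [hw]; simp only [B_add', B_smul', ha₁, ha₂, ha₃, ha₄]
    rw [← hk] at this
    rw [hv] at this
    linear_combination this
  obtain ⟨l, α, β, γ, δ, hlin, hquad⟩ := nt_solvable m k a₁ a₂ a₃ a₄ hcombo
  refine ⟨l • w + α • u₁ + β • u₂ + γ • u₃ + δ • u₄, ?_, ?_⟩
  · simp only [B_add, B_smul, B_add', B_smul', hw1, hw2, hw3, hw4, h1w, h2w, h3w, h4w,
      g11, g22, g12, g21, g33, g44, g34, g43, g13, g14, g23, g24, g31, g41, g32, g42, hm]
    linear_combination 2 * hquad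
  · simp only [B_add', B_smul', ← hk, ← ha₁, ← ha₂, ← ha₃, ← ha₄]
    linear_combination hlin


private def eichlerMap (t h : ℤ) (u : L) : L × ℤ →ₗ[ℤ] L × ℤ where
  toFun p := (p.1 + (t * p.2 + h * B p.1 u) • u, p.2 + B p.1 u)
  map_add' p q := by
    have h1 : B (p.1 + q.1) u = B p.1 u + B q.1 u := B_add B _ _ _
    rw [Prod.ext_iff]
    constructor
    · show p.1 + q.1 + (t * (p.2 + q.2) + h * B (p.1 + q.1) u) • u = _
      rw [h1]
      have h2 : t * (p.2 + q.2) + h * (B p.1 u + B q.1 u)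
          = (t * p.2 + h * B p.1 u) + (t * q.2 + h * B q.1 u) := by ring
      rw [h2, add_zsmul]
      show _ = p.1 + (t * p.2 + h * B p.1 u) • u + (q.1 + (t * q.2 + h * B q.1 u) • u)
      abel
    · show p.2 + q.2 + B (p.1 + q.1) u = _
      rw [h1]
      show _ = p.2 + B p.1 u + (q.2 + B q.1 u)
      ring
  map_smul' c p := by
    simp only [RingHom.id_apply, Prod.smul_fst, Prod.smul_snd, int_smul_eq_zsmul]
    have h1 : B (c • p.1) u = c * B p.1 u := B_smul B _ _ _
    rw [Prod.ext_iff]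
    constructor
    · show c • p.1 + (t * (c • p.2) + h * B (c • p.1) u) • u = c • (p.1 + (t * p.2 + h * B p.1 u) • u)
      rw [h1, zsmul_eq_mul, Int.cast_id, zsmul_add]
      have h2 : t * (c * p.2) + h * (c * B p.1 u) = c * (t * p.2 + h * B p.1 u) := by ring
      rw [h2, mul_zsmul]
    · show c • p.2 + B (c • p.1) u = c • (p.2 + B p.1 u)
      rw [h1]
      simp only [zsmul_eq_mul, Int.cast_id]
      ring

private lemma eichler_comp (t h : ℤ) (ht : t = 2*h) (u : L) (hu : B u u = 0) :
    (eichlerMap B t h u).comp (eichlerMap B t h (-u)) = LinearMap.id ∧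
    (eichlerMap B t h (-u)).comp (eichlerMap B t h u) = LinearMap.id := by
  constructor
  · apply LinearMap.ext
    intro p
    obtain ⟨y, c⟩ := p
    show eichlerMap B t h u (eichlerMap B t h (-u) (y, c)) = (y, c)
    have e1 : eichlerMap B t h (-u) (y, c)
        = (y + (t * c + h * B y (-u)) • (-u), c + B y (-u)) := rfl
    rw [e1, B_neg' ]
    have e2 : B (y + (t * c + h * -(B y u)) • (-u)) u = B y u := by
      simp only [B_add, B_smul, B_neg, hu]; ring
    rw [Prod.ext_iff]
    constructor
    · show y + (t * c + h * -(B y u)) • (-u)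
        + (t * (c + -(B y u)) + h * B (y + (t * c + h * -(B y u)) • (-u)) u) • u = y
      rw [e2]
      have e3 : (t * c + h * -B y u) • (-u) = (-(t*c) + h * B y u) • u := by
        rw [zsmul_neg, ← neg_zsmul]
        congr 1
        ring
      rw [e3]
      have e4 : t * (c + -(B y u)) + h * B y u = (t*c) + (-(B y u)) * t + h * B y u := by ring
      rw [e4, add_assoc, ← add_zsmul]
      have e5 : -(t * c) + h * B y u + (t * c + -B y u * t + h * B y u) = 0 := by
        rw [ht]; ring
      rw [e5, zero_zsmul, add_zero]
    · show c + -(B y u) + B (y + (t * c + h * -(B y u)) • (-u)) u = c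
      rw [e2]; ring
  · apply LinearMap.ext
    intro p
    obtain ⟨y, c⟩ := p
    show eichlerMap B t h (-u) (eichlerMap B t h u (y, c)) = (y, c)
    have e1 : eichlerMap B t h u (y, c)
        = (y + (t * c + h * B y u) • u, c + B y u) := rfl
    rw [e1]
    have e2 : B (y + (t * c + h * B y u) • u) (-u) = -(B y u) := by
      simp only [B_add, B_smul, B_neg', hu]; ring
    rw [Prod.ext_iff]
    constructor
    · show y + (t * c + h * B y u) • u
        + (t * (c + B y u) + h * B (y + (t * c + h * B y u) • u) (-u)) • (-u) = y
      rw [e2]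
      have e3 : (t * (c + B y u) + h * -(B y u)) • (-u)
          = (-(t * c) + (-(B y u))*t + h * B y u) • u := by
        rw [zsmul_neg, ← neg_zsmul]
        congr 1
        ring
      rw [e3, add_assoc, ← add_zsmul]
      have e5 : t * c + h * B y u + (-(t * c) + -B y u * t + h * B y u) = 0 := by
        rw [ht]; ring
      rw [e5, zero_zsmul, add_zero]
    · show c + B y u + B (y + (t * c + h * B y u) • u) (-u) = c
      rw [e2]; ring

private def eichlerEquiv (t h : ℤ) (ht : t = 2*h) (u : L) (hu : B u u = 0) :
    (L × ℤ) ≃ₗ[ℤ] (L × ℤ) :=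
  LinearEquiv.ofLinear (eichlerMap B t h u) (eichlerMap B t h (-u))
    (eichler_comp B t h ht u hu).1 (eichler_comp B t h ht u hu).2


private lemma prodForm_apply (t : ℤ) (v w : L × ℤ) :
    prodForm B t v w = B v.1 w.1 - t * v.2 * w.2 := rfl

private lemma eichlerEquiv_apply (t h : ℤ) (ht : t = 2*h) (u : L) (hu : B u u = 0)
    (y : L) (c : ℤ) :
    eichlerEquiv B t h ht u hu (y, c) = (y + (t * c + h * B y u) • u, c + B y u) := rfl

private lemma eichler_stable (hsymm : IsSymmForm B) (t h : ℤ) (ht : t = 2*h)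
    (u : L) (hu : B u u = 0) :
    IsStableIsometry (prodForm B t) (eichlerEquiv B t h ht u hu) := by
  constructor
  · rintro ⟨v1, v2⟩ ⟨w1, w2⟩
    rw [eichlerEquiv_apply, eichlerEquiv_apply, prodForm_apply, prodForm_apply]
    simp only [B_add, B_smul, B_add', B_smul', hu]
    rw [hsymm u w1, ht]
    ring
  · intro f
    refine ⟨((h * f (u, (0:ℤ)) + f ((0:L), (1:ℤ))) • u, -(f (u, (0:ℤ)))), ?_⟩
    rintro ⟨w1, w2⟩
    rw [eichlerEquiv_apply, prodForm_apply]
    have hdec : ((w1 + (t * w2 + h * B w1 u) • u, w2 + B w1 u) : L × ℤ)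
        = (w1, w2) + ((t * w2 + h * B w1 u) • u, B w1 u) := by
      rw [Prod.ext_iff]; constructor <;> simp
    have hdec2 : (((t * w2 + h * B w1 u) • u, B w1 u) : L × ℤ)
        = (t * w2 + h * B w1 u) • ((u, (0:ℤ)) : L × ℤ)
          + (B w1 u) • (((0:L), (1:ℤ)) : L × ℤ) := by
      rw [Prod.ext_iff]
      constructor
      · show (t * w2 + h * B w1 u) • u
          = (t * w2 + h * B w1 u) • u + (B w1 u) • (0:L)
        rw [zsmul_zero, add_zero]
      · show B w1 u = (t * w2 + h * B w1 u) • (0:ℤ) + (B w1 u) • (1:ℤ)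
        simp [zsmul_eq_mul]
    rw [hdec, map_add, hdec2, map_add, map_zsmul, map_zsmul]
    simp only [B_add, B_smul, zsmul_eq_mul, Int.cast_id]
    rw [hsymm u w1]
    ring
private lemma stable_id (t : ℤ) :
    IsStableIsometry (prodForm B t) (LinearEquiv.refl ℤ (L × ℤ)) := by
  constructor
  · intro v w; rfl
  · intro f
    refine ⟨0, ?_⟩
    intro w
    show f w - f w = prodForm B t 0 w
    rw [map_zero, LinearMap.zero_apply, sub_self]

private lemma stable_comp (t : ℤ) (γ₁ γ₂ : (L × ℤ) ≃ₗ[ℤ] (L × ℤ))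
    (h₁ : IsStableIsometry (prodForm B t) γ₁) (h₂ : IsStableIsometry (prodForm B t) γ₂) :
    IsStableIsometry (prodForm B t) (γ₁.trans γ₂) := by
  constructor
  · intro v w
    show prodForm B t (γ₂ (γ₁ v)) (γ₂ (γ₁ w)) = _
    rw [h₂.1, h₁.1]
  · intro f
    obtain ⟨x₂, hx₂⟩ := h₂.2 f
    obtain ⟨x₁, hx₁⟩ := h₁.2 f
    refine ⟨γ₁.symm x₂ + x₁, ?_⟩
    intro w
    have e1 : prodForm B t (γ₁.symm x₂ + x₁) w
        = prodForm B t (γ₁.symm x₂) w + prodForm B t x₁ w := by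
      rw [map_add, LinearMap.add_apply]
    have e2 : prodForm B t (γ₁.symm x₂) w = prodForm B t x₂ (γ₁ w) := by
      conv_rhs => rw [show x₂ = γ₁ (γ₁.symm x₂) from (γ₁.apply_symm_apply x₂).symm]
      rw [h₁.1]
    rw [e1, e2, ← hx₂ (γ₁ w), ← hx₁ w]
    show f (γ₂ (γ₁ w)) - f w = _
    ring

private lemma divisibility_transport (t : ℤ) (γ : (L × ℤ) ≃ₗ[ℤ] (L × ℤ))
    (hγ : ∀ v w : L × ℤ, prodForm B t (γ v) (γ w) = prodForm B t v w)
    (z : L × ℤ) (d : ℤ) :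
    IsDivisibility (prodForm B t) z d ↔ IsDivisibility (prodForm B t) (γ z) d := by
  have key : ∀ w, prodForm B t (γ z) w = prodForm B t z (γ.symm w) := by
    intro w
    conv_lhs => rw [show w = γ (γ.symm w) from (γ.apply_symm_apply w).symm]
    rw [hγ]
  constructor
  · rintro ⟨h0, h1, h2⟩
    refine ⟨h0, fun w => by rw [key]; exact h1 _, fun d' hd' => ?_⟩
    refine h2 d' fun w => ?_
    have := hd' (γ w)
    rwa [key, γ.symm_apply_apply] at this
  · rintro ⟨h0, h1, h2⟩
    refine ⟨h0, fun w => ?_, fun d' hd' => ?_⟩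
    · have := h1 (γ w)
      rwa [hγ] at this
    · refine h2 d' fun w => ?_
      rw [key]; exact hd' _

/-- One shift step: `(t•x, b) ↦ (t•x', b + ε t)` by a stable isometry, `ε = ±1`. -/
private lemma shift_step [Module.Free ℤ L] [Module.Finite ℤ L]
    (hsymm : IsSymmForm B) (heven : IsEvenForm B)
    (huni : IsUnimodularForm B) (hUU : ContainsUU B)
    (t h : ℤ) (ht : t = 2*h) (x : L) (hx : IsPrimitiveVec x) (b ε : ℤ)
    (hε : ε = 1 ∨ ε = -1) :
    ∃ x' : L, IsPrimitiveVec x' ∧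
      ∃ γ : (L × ℤ) ≃ₗ[ℤ] (L × ℤ), IsStableIsometry (prodForm B t) γ ∧
        γ ((t • x, b) : L × ℤ) = ((t • x', b + ε * t) : L × ℤ) := by
  obtain ⟨u₀, hu₀, hxu₀⟩ := exists_isotropic B hsymm heven huni hUU x hx
  obtain ⟨u, hu⟩ : ∃ u : L, u = (-ε) • u₀ := ⟨_, rfl⟩
  have huu : B u u = 0 := by
    rw [hu, B_smul, B_smul', hu₀]; ring
  have hxu : B x u = ε := by
    rw [hu, B_smul', hxu₀]
    rcases hε with h1 | h1 <;> rw [h1] <;> ring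
  have htx : B (t • x) u = t * ε := by rw [B_smul, hxu]
  refine ⟨x + (b + h * ε) • u, ?_, eichlerEquiv B t h ht u huu, eichler_stable B hsymm t h ht u huu, ?_⟩
  · intro n z hz
    have hBz : B (x + (b + h * ε) • u) u = ε := by
      rw [B_add, B_smul, hxu, huu]; ring
    rw [hz, B_smul] at hBz
    have : IsUnit n := isUnit_of_mul_isUnit_left (y := B z u) (by rw [hBz]; exact hε.elim (fun h => h ▸ isUnit_one) (fun h => h ▸ IsUnit.neg isUnit_one))
    exact Int.isUnit_iff.mp this
  · rw [eichlerEquiv_apply, htx]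
    rw [Prod.ext_iff]
    constructor
    · show t • x + (t * b + h * (t * ε)) • u = t • (x + (b + h * ε) • u)
      rw [zsmul_add, ← mul_zsmul]
      have e : t * b + h * (t * ε) = t * (b + h * ε) := by ring
      rw [e]
    · show b + t * ε = b + ε * t
      ring

end Lattice

/-- in `Λ = L ⊕ ℤe`, `L` even unimodular containing `U ⊕ U`,
`q(e) = -t` with `t > 0` even: for `x ∈ L` primitive and `b ∈ ℤ` there is a
primitive `x' ∈ L` such that `t•x + b•e` and `t•x' + (b - t)•e` have the same
square, the same divisibility, and lie in the same `Õ(Λ)`-orbit.  Consequently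
every `t•x + b•e` (`x` primitive) is `Õ(Λ)`-conjugate to some `t•x' + b'•e` with
`x'` primitive and `|b'| ≤ t/2` (i.e. `2|b'| ≤ t`). -/

theorem shift_b_modulo_t
    (t : ℤ) (ht : 0 < t) (hteven : Even t)
    (L : Type*) [AddCommGroup L] [Module ℤ L] [Module.Free ℤ L] [Module.Finite ℤ L]
    (B : BilinForm ℤ L) (hsymm : IsSymmForm B) (heven : IsEvenForm B)
    (huni : IsUnimodularForm B) (hUU : ContainsUU B) :
    (∀ x : L, IsPrimitiveVec x → ∀ b : ℤ,
      ∃ x' : L, IsPrimitiveVec x' ∧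
        prodForm B t ((t • x, b) : L × ℤ) ((t • x, b) : L × ℤ) =
          prodForm B t ((t • x', b - t) : L × ℤ) ((t • x', b - t) : L × ℤ) ∧
        (∀ d : ℤ, IsDivisibility (prodForm B t) ((t • x, b) : L × ℤ) d ↔
          IsDivisibility (prodForm B t) ((t • x', b - t) : L × ℤ) d) ∧
        ∃ γ : (L × ℤ) ≃ₗ[ℤ] (L × ℤ), IsStableIsometry (prodForm B t) γ ∧
          γ ((t • x, b) : L × ℤ) = ((t • x', b - t) : L × ℤ)) ∧
    (∀ x : L, IsPrimitiveVec x → ∀ b : ℤ,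
      ∃ (x' : L) (b' : ℤ), IsPrimitiveVec x' ∧ 2 * |b'| ≤ t ∧
        ∃ γ : (L × ℤ) ≃ₗ[ℤ] (L × ℤ), IsStableIsometry (prodForm B t) γ ∧
          γ ((t • x, b) : L × ℤ) = ((t • x', b') : L × ℤ)) := by
  obtain ⟨h, hh⟩ := hteven
  have ht2 : t = 2 * h := by omega
  have part1 : ∀ x : L, IsPrimitiveVec x → ∀ b : ℤ,
      ∃ x' : L, IsPrimitiveVec x' ∧
        prodForm B t ((t • x, b) : L × ℤ) ((t • x, b) : L × ℤ) =
          prodForm B t ((t • x', b - t) : L × ℤ) ((t • x', b - t) : L × ℤ) ∧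
        (∀ d : ℤ, IsDivisibility (prodForm B t) ((t • x, b) : L × ℤ) d ↔
          IsDivisibility (prodForm B t) ((t • x', b - t) : L × ℤ) d) ∧
        ∃ γ : (L × ℤ) ≃ₗ[ℤ] (L × ℤ), IsStableIsometry (prodForm B t) γ ∧
          γ ((t • x, b) : L × ℤ) = ((t • x', b - t) : L × ℤ) := by
    intro x hx b
    obtain ⟨x', hx', γ, hγst, hγmap⟩ :=
      shift_step B hsymm heven huni hUU t h ht2 x hx b (-1) (Or.inr rfl)
    have hmap' : γ ((t • x, b) : L × ℤ) = ((t • x', b - t) : L × ℤ) := by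
      rw [hγmap, Prod.ext_iff]
      exact ⟨rfl, by ring⟩
    refine ⟨x', hx', ?_, ?_, γ, hγst, hmap'⟩
    · have := hγst.1 (t • x, b) (t • x, b)
      rw [hmap'] at this
      exact this.symm
    · intro d
      have := divisibility_transport B t γ hγst.1 (t • x, b) d
      rwa [hmap'] at this
  refine ⟨part1, ?_⟩
  intro x hx b
  have main : ∀ n : ℕ, ∀ b : ℤ, b.natAbs ≤ n → ∀ x : L, IsPrimitiveVec x →
      ∃ (x' : L) (b' : ℤ), IsPrimitiveVec x' ∧ 2 * |b'| ≤ t ∧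
        ∃ γ : (L × ℤ) ≃ₗ[ℤ] (L × ℤ), IsStableIsometry (prodForm B t) γ ∧
          γ ((t • x, b) : L × ℤ) = ((t • x', b') : L × ℤ) := by
    intro n
    induction n with
    | zero =>
      intro b hb x hx
      have hb0 : b = 0 := by omega
      subst hb0
      exact ⟨x, 0, hx, by simpa using ht.le, LinearEquiv.refl ℤ (L × ℤ), stable_id B t, rfl⟩
    | succ n ih =>
      intro b hb x hx
      by_cases hsmall : 2 * |b| ≤ t
      · exact ⟨x, b, hx, hsmall, LinearEquiv.refl ℤ (L × ℤ), stable_id B t, rfl⟩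
      · have hsm : ¬(2 * (b.natAbs : ℤ) ≤ t) := by rwa [Int.abs_eq_natAbs] at hsmall
        rcases lt_or_ge b 0 with hneg | hpos
        · obtain ⟨x₁, hx₁, γ₁, hst₁, hmap₁⟩ :=
            shift_step B hsymm heven huni hUU t h ht2 x hx b 1 (Or.inl rfl)
          have hlt : (b + 1 * t).natAbs ≤ n := by omega
          obtain ⟨x', b', hx', hb', γ₂, hst₂, hmap₂⟩ := ih (b + 1 * t) hlt x₁ hx₁
          refine ⟨x', b', hx', hb', γ₁.trans γ₂, stable_comp B t γ₁ γ₂ hst₁ hst₂, ?_⟩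
          show γ₂ (γ₁ ((t • x, b) : L × ℤ)) = _
          rw [hmap₁, hmap₂]
        · obtain ⟨x₁, hx₁, γ₁, hst₁, hmap₁⟩ :=
            shift_step B hsymm heven huni hUU t h ht2 x hx b (-1) (Or.inr rfl)
          have hlt : (b + (-1) * t).natAbs ≤ n := by omega
          obtain ⟨x', b', hx', hb', γ₂, hst₂, hmap₂⟩ := ih (b + (-1) * t) hlt x₁ hx₁
          refine ⟨x', b', hx', hb', γ₁.trans γ₂, stable_comp B t γ₁ γ₂ hst₁ hst₂, ?_⟩
          show γ₂ (γ₁ ((t • x, b) : L × ℤ)) = _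
          rw [hmap₁, hmap₂]
  exact main b.natAbs b le_rfl x hx
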